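/- arXiv:1603.03366 — 2 statements merged into one kernel-verified Lean document; each statement's English description precedes it below -/
import Mathlib

section
/- Assume λ_Q < 0 and Condition 7 holds (∃ d ≠ 0 with Qd = λ_Q d, ±Ad ∈ 𝒦). Let X = {(y,t) : ‖y‖ ≤ 1, Ay − b ∈ 𝒦, yᵀQy + 2gᵀy ≤ t}. Then conv(X) = {(y,t) : ‖y‖ ≤ 1, Ay − b ∈ 𝒦, yᵀ(Q − λ_Q I)y + 2gᵀy + λ_Q ≤ t}, and this set is closed and convex. -/
open Matrix

lemma aux_expand {n : ℕ} (M : Matrix (Fin n) (Fin n) ℝ) (x z : Fin n → ℝ) (a c : ℝ) :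
    (a • x + c • z) ⬝ᵥ M.mulVec (a • x + c • z)
      = a^2 * (x ⬝ᵥ M.mulVec x) + a*c*(x ⬝ᵥ M.mulVec z) + a*c*(z ⬝ᵥ M.mulVec x)
        + c^2 * (z ⬝ᵥ M.mulVec z) := by
  simp [Matrix.mulVec_add, Matrix.mulVec_smul, add_dotProduct, smul_dotProduct,
    dotProduct_add, dotProduct_smul, smul_eq_mul]
  ring

lemma aux_symm {n : ℕ} (M : Matrix (Fin n) (Fin n) ℝ) (hM : M.IsSymm) (x z : Fin n → ℝ) :
    x ⬝ᵥ M.mulVec z = z ⬝ᵥ M.mulVec x := by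
  rw [Matrix.dotProduct_mulVec, ← Matrix.mulVec_transpose, hM, dotProduct_comm]

lemma aux_Msymm {n : ℕ} (Q : Matrix (Fin n) (Fin n) ℝ) (hQ : Q.IsSymm) (lamQ : ℝ) :
    (Q - lamQ • (1 : Matrix (Fin n) (Fin n) ℝ)).IsSymm := by
  unfold Matrix.IsSymm
  rw [Matrix.transpose_sub, Matrix.transpose_smul, Matrix.transpose_one, hQ]

lemma aux_Mexpand {n : ℕ} (Q : Matrix (Fin n) (Fin n) ℝ) (lamQ : ℝ) (v : Fin n → ℝ) :
    v ⬝ᵥ (Q - lamQ • (1 : Matrix (Fin n) (Fin n) ℝ)).mulVec v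
      = v ⬝ᵥ Q.mulVec v - lamQ * (v ⬝ᵥ v) := by
  rw [Matrix.sub_mulVec, dotProduct_sub, Matrix.smul_mulVec, Matrix.one_mulVec,
    dotProduct_smul, smul_eq_mul]

lemma aux_norm {n : ℕ} (y : EuclideanSpace ℝ (Fin n)) : y ⬝ᵥ y = ‖y‖^2 := by
  rw [← real_inner_self_eq_norm_sq]
  simp [PiLp.inner_apply, dotProduct, RCLike.inner_apply]
  rw [EuclideanSpace.norm_eq, Real.sq_sqrt (by positivity)]; simp [sq, Real.norm_eq_abs]

lemma aux_dot_expand {n : ℕ} (x z : Fin n → ℝ) (a c : ℝ) :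
    (a • x + c • z) ⬝ᵥ (a • x + c • z)
      = a^2*(x ⬝ᵥ x) + 2*(a*c)*(x ⬝ᵥ z) + c^2*(z ⬝ᵥ z) := by
  rw [add_dotProduct, smul_dotProduct, smul_dotProduct, dotProduct_add, dotProduct_add,
    dotProduct_smul, dotProduct_smul, dotProduct_smul, dotProduct_smul, dotProduct_comm z x]
  simp [smul_eq_mul]; ring


lemma aux_line {n : ℕ} (Q : Matrix (Fin n) (Fin n) ℝ) (hQ : Q.IsSymm)
    (y d gv : Fin n → ℝ) (lamQ s : ℝ) (hdQ : Q.mulVec d = lamQ • d) :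
    (y + s • d) ⬝ᵥ Q.mulVec (y + s • d) + 2 * (gv ⬝ᵥ (y + s • d))
      = (y ⬝ᵥ Q.mulVec y + 2 * (gv ⬝ᵥ y)) + 2*s*(lamQ*(y ⬝ᵥ d) + gv ⬝ᵥ d)
        + s^2*lamQ*(d ⬝ᵥ d) := by
  rw [Matrix.mulVec_add, Matrix.mulVec_smul, hdQ]
  simp only [dotProduct_add, add_dotProduct, smul_dotProduct, dotProduct_smul, smul_eq_mul,
    aux_symm Q hQ d y, hdQ, dotProduct_comm d y]
  ring

lemma aux_sq {n : ℕ} (y d : Fin n → ℝ) (s : ℝ) :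
    (y + s • d) ⬝ᵥ (y + s • d) = y ⬝ᵥ y + 2*(y ⬝ᵥ d)*s + s^2*(d ⬝ᵥ d) := by
  simp only [dotProduct_add, add_dotProduct, smul_dotProduct, dotProduct_smul, smul_eq_mul,
    dotProduct_comm d y]
  ring

lemma aux_mulvec {n m : ℕ} (A : Matrix (Fin m) (Fin n) ℝ) (y d : Fin n → ℝ) (bv : Fin m → ℝ)
    (s : ℝ) : A.mulVec (y + s • d) - bv = (A.mulVec y - bv) + s • A.mulVec d := by
  rw [Matrix.mulVec_add, Matrix.mulVec_smul]
  funext i; simp; ring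

set_option maxHeartbeats 1600000 in
theorem TRS_epigraph_convex_hull {n m : ℕ} (Q : Matrix (Fin n) (Fin n) ℝ)
    (g : EuclideanSpace ℝ (Fin n)) (lamQ : ℝ)
    (A : Matrix (Fin m) (Fin n) ℝ) (b : Fin m → ℝ) (K : Set (Fin m → ℝ))
    (hQ : Q.IsSymm)
    (hlb : ∀ y : EuclideanSpace ℝ (Fin n), lamQ * ‖y‖ ^ 2 ≤ y ⬝ᵥ Q.mulVec y)
    (hev : ∃ v : EuclideanSpace ℝ (Fin n), v ≠ 0 ∧ Q.mulVec v = lamQ • (v : Fin n → ℝ))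
    (hneg : lamQ < 0)
    (hKclosed : IsClosed K) (hKconv : Convex ℝ K)
    (hKcone : ∀ x ∈ K, ∀ c : ℝ, 0 ≤ c → c • x ∈ K)
    (hcond7 : ∃ d : EuclideanSpace ℝ (Fin n), d ≠ 0 ∧
      Q.mulVec d = lamQ • (d : Fin n → ℝ) ∧ A.mulVec d ∈ K ∧ -A.mulVec d ∈ K)
    (X Y : Set (EuclideanSpace ℝ (Fin n) × ℝ))
    (hX : X = {p : EuclideanSpace ℝ (Fin n) × ℝ | ‖p.1‖ ≤ 1 ∧ A.mulVec p.1 - b ∈ K ∧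
      p.1 ⬝ᵥ Q.mulVec p.1 + 2 * (g ⬝ᵥ p.1) ≤ p.2})
    (hY : Y = {p : EuclideanSpace ℝ (Fin n) × ℝ | ‖p.1‖ ≤ 1 ∧ A.mulVec p.1 - b ∈ K ∧
      p.1 ⬝ᵥ (Q - lamQ • (1 : Matrix (Fin n) (Fin n) ℝ)).mulVec p.1
        + 2 * (g ⬝ᵥ p.1) + lamQ ≤ p.2}) :
    convexHull ℝ X = Y ∧ IsClosed Y ∧ Convex ℝ Y := by
  classical
  set M : Matrix (Fin n) (Fin n) ℝ := Q - lamQ • (1 : Matrix (Fin n) (Fin n) ℝ) with hMdef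
  have hMsymm : M.IsSymm := aux_Msymm Q hQ lamQ
  have hMexp : ∀ v : Fin n → ℝ, v ⬝ᵥ M.mulVec v = v ⬝ᵥ Q.mulVec v - lamQ * (v ⬝ᵥ v) :=
    aux_Mexpand Q lamQ
  have hMpsd : ∀ v : EuclideanSpace ℝ (Fin n), 0 ≤ v ⬝ᵥ M.mulVec v := by
    intro v
    have h1 := hlb v
    rw [hMexp v, aux_norm v]
    linarith
  -- convexity inequality for the M-quadratic form
  have hquadconv : ∀ (x z : EuclideanSpace ℝ (Fin n)) (a c : ℝ), 0 ≤ a → 0 ≤ c → a + c = 1 →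
      (a • (x : Fin n → ℝ) + c • (z : Fin n → ℝ)) ⬝ᵥ
          M.mulVec (a • (x : Fin n → ℝ) + c • (z : Fin n → ℝ))
        ≤ a * (x ⬝ᵥ M.mulVec x) + c * (z ⬝ᵥ M.mulVec z) := by
    intro x z a c ha hc hac
    rw [aux_expand, aux_symm M hMsymm x z]
    have hpsd : 0 ≤ ((x - z : EuclideanSpace ℝ (Fin n)) : Fin n → ℝ) ⬝ᵥ
        M.mulVec ((x - z : EuclideanSpace ℝ (Fin n)) : Fin n → ℝ) := hMpsd _
    have e2 : (x - z : EuclideanSpace ℝ (Fin n))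
        = ((1:ℝ) • (x : Fin n → ℝ) + (-1:ℝ) • (z : Fin n → ℝ) : Fin n → ℝ) := by
      funext i; simp [PiLp.sub_apply, sub_eq_add_neg]
    rw [e2, aux_expand, aux_symm M hMsymm x z] at hpsd
    have h1 : a*(x ⬝ᵥ M.mulVec x)*(a+c) = a*(x ⬝ᵥ M.mulVec x) := by rw [hac]; ring
    have h2 : c*(z ⬝ᵥ M.mulVec z)*(a+c) = c*(z ⬝ᵥ M.mulVec z) := by rw [hac]; ring
    nlinarith [mul_nonneg (mul_nonneg ha hc) hpsd, h1, h2]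
  have hYconv : Convex ℝ Y := by
    rw [hY]
    rintro ⟨y1, t1⟩ ⟨h11, h12, h13⟩ ⟨y2, t2⟩ ⟨h21, h22, h23⟩ a c ha hc hac
    have e0 : (a • y1 + c • y2 : EuclideanSpace ℝ (Fin n))
        = (a • (y1 : Fin n → ℝ) + c • (y2 : Fin n → ℝ) : Fin n → ℝ) := rfl
    refine ⟨?_, ?_, ?_⟩
    · show ‖a • y1 + c • y2‖ ≤ 1
      calc ‖a • y1 + c • y2‖ ≤ ‖a • y1‖ + ‖c • y2‖ := norm_add_le _ _
        _ = a * ‖y1‖ + c * ‖y2‖ := by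
            rw [norm_smul, norm_smul, Real.norm_of_nonneg ha, Real.norm_of_nonneg hc]
        _ ≤ a * 1 + c * 1 := by
            exact add_le_add (mul_le_mul_of_nonneg_left h11 ha) (mul_le_mul_of_nonneg_left h21 hc)
        _ = 1 := by linarith
    · show A.mulVec (a • y1 + c • y2 : EuclideanSpace ℝ (Fin n)) - b ∈ K
      have e : A.mulVec (a • y1 + c • y2 : EuclideanSpace ℝ (Fin n)) - b
          = a • (A.mulVec y1 - b) + c • (A.mulVec y2 - b) := by
        rw [e0, Matrix.mulVec_add, Matrix.mulVec_smul, Matrix.mulVec_smul]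
        funext i
        simp only [Pi.add_apply, Pi.sub_apply, Pi.smul_apply, smul_eq_mul]
        linear_combination (b i) * hac
      rw [e]
      exact hKconv h12 h22 ha hc hac
    · show (a • y1 + c • y2 : EuclideanSpace ℝ (Fin n)) ⬝ᵥ
          M.mulVec (a • y1 + c • y2 : EuclideanSpace ℝ (Fin n))
          + 2 * (g ⬝ᵥ (a • y1 + c • y2 : EuclideanSpace ℝ (Fin n))) + lamQ ≤ a • t1 + c • t2
      rw [e0]
      have hg : (g : Fin n → ℝ) ⬝ᵥ (a • (y1 : Fin n → ℝ) + c • (y2 : Fin n → ℝ))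
          = a * (g ⬝ᵥ y1) + c * (g ⬝ᵥ y2) := by
        rw [dotProduct_add, dotProduct_smul, dotProduct_smul]; simp [smul_eq_mul]
      rw [hg, smul_eq_mul, smul_eq_mul]
      have hqc := hquadconv y1 y2 a c ha hc hac
      nlinarith [mul_le_mul_of_nonneg_left h13 ha, mul_le_mul_of_nonneg_left h23 hc]
  -- closedness of Y
  have hYclosed : IsClosed Y := by
    rw [hY]
    have c1 : IsClosed {p : EuclideanSpace ℝ (Fin n) × ℝ | ‖p.1‖ ≤ 1} :=
      isClosed_le continuous_fst.norm continuous_const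
    have hA : Continuous fun v : EuclideanSpace ℝ (Fin n) => A.mulVec v - b := by
      have hF : Continuous fun v : Fin n → ℝ => A.mulVec v - b := by
        unfold Matrix.mulVec dotProduct
        fun_prop
      exact hF.comp (PiLp.continuous_ofLp (p := 2) (β := fun _ : Fin n => ℝ))
    have c2 : IsClosed {p : EuclideanSpace ℝ (Fin n) × ℝ | A.mulVec p.1 - b ∈ K} :=
      IsClosed.preimage (hA.comp continuous_fst) hKclosed
    have hf : Continuous fun v : EuclideanSpace ℝ (Fin n) =>
        v ⬝ᵥ M.mulVec v + 2 * (g ⬝ᵥ v) + lamQ := by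
      have hF : Continuous fun v : Fin n → ℝ =>
          v ⬝ᵥ M.mulVec v + 2 * ((g : Fin n → ℝ) ⬝ᵥ v) + lamQ := by
        unfold Matrix.mulVec dotProduct
        fun_prop
      exact hF.comp (PiLp.continuous_ofLp (p := 2) (β := fun _ : Fin n => ℝ))
    have c3 : IsClosed {p : EuclideanSpace ℝ (Fin n) × ℝ |
        p.1 ⬝ᵥ M.mulVec p.1 + 2 * (g ⬝ᵥ p.1) + lamQ ≤ p.2} :=
      isClosed_le (hf.comp continuous_fst) continuous_snd
    exact c1.inter (c2.inter c3)
  -- X ⊆ Y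
  have hXY : X ⊆ Y := by
    rw [hX, hY]
    rintro ⟨y, t⟩ ⟨h1, h2, h3⟩
    refine ⟨h1, h2, ?_⟩
    show (y : Fin n → ℝ) ⬝ᵥ M.mulVec y + 2 * (g ⬝ᵥ y) + lamQ ≤ t
    rw [hMexp, aux_norm]
    have h5 : ‖y‖^2 ≤ 1 := by nlinarith [norm_nonneg y]
    nlinarith [h3, mul_nonpos_of_nonpos_of_nonneg hneg.le (by linarith : (0:ℝ) ≤ 1 - ‖y‖^2)]
  -- Y ⊆ convexHull X
  have hYX : Y ⊆ convexHull ℝ X := by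
    rw [hY]
    rintro ⟨y, t⟩ ⟨h1, h2, h3⟩
    rw [show (y, t).1 = y from rfl, show (y, t).2 = t from rfl] at *
    have h3' : (y : Fin n → ℝ) ⬝ᵥ Q.mulVec y - lamQ * ‖y‖^2 + 2 * (g ⬝ᵥ y) + lamQ ≤ t := by
      rw [← aux_norm, ← hMexp]; exact h3
    by_cases hcase : ‖y‖ = 1
    · apply subset_convexHull
      rw [hX]
      refine ⟨h1, h2, ?_⟩
      rw [hcase] at h3'
      show (y : Fin n → ℝ) ⬝ᵥ Q.mulVec y + 2 * (g ⬝ᵥ y) ≤ t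
      nlinarith [h3']
    · have hlt : ‖y‖ < 1 := lt_of_le_of_ne h1 hcase
      obtain ⟨d, hd0, hdQ, hdK, hdK'⟩ := hcond7
      set cc := (d : Fin n → ℝ) ⬝ᵥ d with hccdef
      have hdn : 0 < ‖d‖ := norm_pos_iff.mpr hd0
      have hc : 0 < cc := by rw [hccdef, aux_norm]; positivity
      set β := (y : Fin n → ℝ) ⬝ᵥ d with hβdef
      set D := β^2 + cc*(1 - ‖y‖^2) with hDdef
      have hD : 0 < D := by
        have : 0 < 1 - ‖y‖^2 := by nlinarith [norm_nonneg y]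
        nlinarith [sq_nonneg β]
      set r := Real.sqrt D with hrdef
      have hr2 : r^2 = D := Real.sq_sqrt hD.le
      have hr : 0 < r := Real.sqrt_pos.mpr hD
      have hy2 : 0 < 1 - ‖y‖^2 := by nlinarith [norm_nonneg y]
      have hβr : β < r := by nlinarith
      have hβr' : -r < β := by nlinarith
      set s₁ := (r - β)/cc with hs1
      set s₂ := (-r - β)/cc with hs2
      have hs1pos : 0 < s₁ := div_pos (by linarith) hc
      have hs2neg : s₂ < 0 := div_neg_of_neg_of_pos (by linarith) hc
      have hroot1 : cc*s₁^2 + 2*β*s₁ + (‖y‖^2 - 1) = 0 := by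
        rw [hs1]; field_simp; linear_combination hr2
      have hroot2 : cc*s₂^2 + 2*β*s₂ + (‖y‖^2 - 1) = 0 := by
        rw [hs2]; field_simp; linear_combination hr2
      set μ := (β + r)/(2*r) with hμ
      have hμpos : 0 < μ := div_pos (by linarith) (by linarith)
      have hμlt : μ < 1 := by rw [hμ, div_lt_one (by linarith)]; linarith
      have hsum0 : μ * s₁ + (1 - μ) * s₂ = 0 := by
        rw [hμ, hs1, hs2]; field_simp; ring
      have hsumsq : cc * (μ * s₁^2 + (1 - μ) * s₂^2) = 1 - ‖y‖^2 := by
        rw [hμ, hs1, hs2]; field_simp [hc.ne', hr.ne']; linear_combination (2*r) * hr2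
      -- quadratic along the line
      have hq : ∀ s : ℝ,
          ((y + s • d : EuclideanSpace ℝ (Fin n)) : Fin n → ℝ) ⬝ᵥ
              Q.mulVec ((y + s • d : EuclideanSpace ℝ (Fin n)) : Fin n → ℝ)
            + 2 * ((g : Fin n → ℝ) ⬝ᵥ ((y + s • d : EuclideanSpace ℝ (Fin n)) : Fin n → ℝ))
          = ((y : Fin n → ℝ) ⬝ᵥ Q.mulVec y + 2 * (g ⬝ᵥ y))
            + 2*s*(lamQ*β + (g : Fin n → ℝ) ⬝ᵥ d) + s^2*lamQ*cc := by
        intro s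
        exact aux_line Q hQ y d g lamQ s hdQ
      -- norm on the sphere
      have hnrm : ∀ s : ℝ, cc*s^2 + 2*β*s + (‖y‖^2 - 1) = 0 →
          ‖(y + s • d : EuclideanSpace ℝ (Fin n))‖ = 1 := by
        intro s hs
        have h5 : ((y + s • d : EuclideanSpace ℝ (Fin n))) ⬝ᵥ
            ((y + s • d : EuclideanSpace ℝ (Fin n)) : Fin n → ℝ) = ‖y‖^2 + 2*β*s + s^2*cc := by
          rw [show ((y + s • d : EuclideanSpace ℝ (Fin n))) ⬝ᵥ
              ((y + s • d : EuclideanSpace ℝ (Fin n)) : Fin n → ℝ)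
              = (y : Fin n → ℝ) ⬝ᵥ y + 2*((y : Fin n → ℝ) ⬝ᵥ d)*s + s^2*((d : Fin n → ℝ) ⬝ᵥ d)
            from aux_sq y d s, aux_norm]
        have h6 : ‖(y + s • d : EuclideanSpace ℝ (Fin n))‖^2 = 1 := by
          rw [← aux_norm, h5]; linarith
        nlinarith [norm_nonneg (y + s • d : EuclideanSpace ℝ (Fin n))]
      -- feasibility
      have hKadd : ∀ u ∈ K, ∀ w ∈ K, u + w ∈ K := by
        intro u hu w hw
        have h7 : ((1:ℝ)/2) • u + ((1:ℝ)/2) • w ∈ K :=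
          hKconv hu hw (by norm_num) (by norm_num) (by norm_num)
        have h8 := hKcone _ h7 2 (by norm_num)
        have e : (2:ℝ) • (((1:ℝ)/2) • u + ((1:ℝ)/2) • w) = u + w := by
          rw [smul_add, smul_smul, smul_smul]; norm_num
        rwa [e] at h8
      have hfeas : ∀ s : ℝ, s • A.mulVec (d : Fin n → ℝ) ∈ K →
          A.mulVec ((y + s • d : EuclideanSpace ℝ (Fin n)) : Fin n → ℝ) - b ∈ K := by
        intro s hs
        have e : A.mulVec ((y + s • d : EuclideanSpace ℝ (Fin n)) : Fin n → ℝ) - b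
            = (A.mulVec (y : Fin n → ℝ) - b) + s • A.mulVec (d : Fin n → ℝ) :=
          aux_mulvec A y d b s
        rw [e]
        exact hKadd _ h2 _ hs
      have hs1K : s₁ • A.mulVec (d : Fin n → ℝ) ∈ K := hKcone _ hdK s₁ hs1pos.le
      have hs2K : s₂ • A.mulVec (d : Fin n → ℝ) ∈ K := by
        have h9 := hKcone _ hdK' (-s₂) (by linarith)
        have e : (-s₂) • (-A.mulVec (d : Fin n → ℝ)) = s₂ • A.mulVec (d : Fin n → ℝ) := by
          rw [smul_neg, ← neg_smul, neg_neg]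
        rwa [e] at h9
      -- epigraph values
      set q0 := (y : Fin n → ℝ) ⬝ᵥ Q.mulVec y + 2 * (g ⬝ᵥ y) with hq0
      set δ := t - (q0 + lamQ*(1 - ‖y‖^2)) with hδdef
      have hδ : 0 ≤ δ := by rw [hδdef, hq0]; linarith [h3']
      set t₁ := q0 + 2*s₁*(lamQ*β + (g : Fin n → ℝ) ⬝ᵥ d) + s₁^2*lamQ*cc + δ with ht1
      set t₂ := q0 + 2*s₂*(lamQ*β + (g : Fin n → ℝ) ⬝ᵥ d) + s₂^2*lamQ*cc + δ with ht2
      have hp1 : ((y + s₁ • d : EuclideanSpace ℝ (Fin n)), t₁) ∈ X := by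
        rw [hX]
        refine ⟨(hnrm s₁ hroot1).le, hfeas s₁ hs1K, ?_⟩
        show _ + 2 * ((g : Fin n → ℝ) ⬝ᵥ _) ≤ t₁
        rw [hq s₁, ht1]
        linarith
      have hp2 : ((y + s₂ • d : EuclideanSpace ℝ (Fin n)), t₂) ∈ X := by
        rw [hX]
        refine ⟨(hnrm s₂ hroot2).le, hfeas s₂ hs2K, ?_⟩
        show _ + 2 * ((g : Fin n → ℝ) ⬝ᵥ _) ≤ t₂
        rw [hq s₂, ht2]
        linarith
      have hyc : μ • (y + s₁ • d : EuclideanSpace ℝ (Fin n))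
          + (1 - μ) • (y + s₂ • d : EuclideanSpace ℝ (Fin n)) = y := by
        have h9 : μ • (y + s₁ • d : EuclideanSpace ℝ (Fin n))
            + (1 - μ) • (y + s₂ • d : EuclideanSpace ℝ (Fin n))
            = (μ + (1 - μ)) • y + (μ * s₁ + (1 - μ) * s₂) • d := by module
        rw [h9, hsum0]
        simp
      have htc : μ * t₁ + (1 - μ) * t₂ = t := by
        rw [ht1, ht2, hδdef]
        have e1 : μ * s₁ + (1 - μ) * s₂ = 0 := hsum0
        have e2 : cc * (μ * s₁^2 + (1 - μ) * s₂^2) = 1 - ‖y‖^2 := hsumsq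
        linear_combination (2*(lamQ*β + (g : Fin n → ℝ) ⬝ᵥ d)) * e1 + lamQ * e2
      have heq : ((y : EuclideanSpace ℝ (Fin n)), t)
          = μ • ((y + s₁ • d : EuclideanSpace ℝ (Fin n)), t₁)
            + (1 - μ) • ((y + s₂ • d : EuclideanSpace ℝ (Fin n)), t₂) := by
        rw [Prod.smul_mk, Prod.smul_mk, Prod.mk_add_mk, hyc]
        rw [smul_eq_mul, smul_eq_mul, htc]
      rw [heq]
      exact convex_convexHull ℝ X (subset_convexHull ℝ X hp1) (subset_convexHull ℝ X hp2)
        hμpos.le (by linarith) (by ring)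
  exact ⟨Set.Subset.antisymm (convexHull_min hXY hYconv) hYX, hYclosed, hYconv⟩
end

section
/- With f and f_η = f + η‖·‖² as above (η > 0), let y* minimize f and y^η minimize f_η over the closed unit ball. Then ‖y* − y^η‖² ≤ ‖y*‖² − ‖y^η‖²; in particular ‖y^η‖ ≤ ‖y*‖, and if ‖y^η‖ = 1 then y^η = y*. -/
open Matrix

private lemma expand_quad {n : ℕ} (A : Matrix (Fin n) (Fin n) ℝ)
    (hA : ∀ x z : Fin n → ℝ, x ⬝ᵥ A.mulVec z = z ⬝ᵥ A.mulVec x)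
    (g z d : Fin n → ℝ) (η t lam : ℝ) :
    (z + t • d) ⬝ᵥ A.mulVec (z + t • d) + 2 * (g ⬝ᵥ (z + t • d)) + lam
      + η * ((z + t • d) ⬝ᵥ (z + t • d))
    = (z ⬝ᵥ A.mulVec z + 2 * (g ⬝ᵥ z) + lam + η * (z ⬝ᵥ z))
      + t * (2 * (z ⬝ᵥ A.mulVec d) + 2 * (g ⬝ᵥ d) + 2 * η * (z ⬝ᵥ d))
      + t ^ 2 * (d ⬝ᵥ A.mulVec d + η * (d ⬝ᵥ d)) := by
  simp only [Matrix.mulVec_add, Matrix.mulVec_smul, add_dotProduct,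
    dotProduct_add, smul_dotProduct, dotProduct_smul,
    smul_eq_mul, hA d z, dotProduct_comm d z]
  ring

theorem approx_eigenvalue_solution_distance {n : ℕ} (Q : Matrix (Fin n) (Fin n) ℝ)
    (g : EuclideanSpace ℝ (Fin n)) (lamQ : ℝ) (η : ℝ)
    (hQ : Q.IsSymm)
    (hlb : ∀ y : EuclideanSpace ℝ (Fin n), lamQ * ‖y‖ ^ 2 ≤ y ⬝ᵥ Q.mulVec y)
    (hev : ∃ v : EuclideanSpace ℝ (Fin n), v ≠ 0 ∧ Q.mulVec v = lamQ • (v : Fin n → ℝ))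
    (hneg : lamQ < 0) (hη : 0 < η)
    (f fη : EuclideanSpace ℝ (Fin n) → ℝ)
    (hf : ∀ y, f y = y ⬝ᵥ (Q - lamQ • (1 : Matrix (Fin n) (Fin n) ℝ)).mulVec y
        + 2 * (g ⬝ᵥ y) + lamQ)
    (hfη : ∀ y, fη y = f y + η * ‖y‖ ^ 2)
    (ystar : EuclideanSpace ℝ (Fin n)) (hystar : ystar ∈ Metric.closedBall 0 1)
    (hystarmin : ∀ y ∈ Metric.closedBall (0 : EuclideanSpace ℝ (Fin n)) 1, f ystar ≤ f y)
    (yeta : EuclideanSpace ℝ (Fin n)) (hyeta : yeta ∈ Metric.closedBall 0 1)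
    (hyetamin : ∀ y ∈ Metric.closedBall (0 : EuclideanSpace ℝ (Fin n)) 1, fη yeta ≤ fη y) :
    ‖ystar - yeta‖ ^ 2 ≤ ‖ystar‖ ^ 2 - ‖yeta‖ ^ 2 ∧
      ‖yeta‖ ≤ ‖ystar‖ ∧ (‖yeta‖ = 1 → yeta = ystar) := by
  set A := Q - lamQ • (1 : Matrix (Fin n) (Fin n) ℝ) with hAdef
  have hns : ∀ y : EuclideanSpace ℝ (Fin n), ‖y‖ ^ 2 = y ⬝ᵥ y := by
    intro y
    rw [EuclideanSpace.norm_eq, Real.sq_sqrt (by positivity)]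
    simp [dotProduct, sq]
  have hAsymm : A.IsSymm := by
    rw [Matrix.IsSymm, hAdef, Matrix.transpose_sub, Matrix.transpose_smul, hQ.eq,
      Matrix.transpose_one]
  have hbil : ∀ x z : Fin n → ℝ, x ⬝ᵥ A.mulVec z = z ⬝ᵥ A.mulVec x := by
    intro x z
    rw [Matrix.dotProduct_mulVec, ← Matrix.mulVec_transpose, hAsymm.eq, dotProduct_comm]
  have hApsd : ∀ y : Fin n → ℝ, 0 ≤ y ⬝ᵥ A.mulVec y := by
    intro y
    have hmv : A.mulVec y = Q.mulVec y - lamQ • y := by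
      rw [hAdef, Matrix.sub_mulVec, Matrix.smul_mulVec, Matrix.one_mulVec]
    rw [hmv, dotProduct_sub, dotProduct_smul, smul_eq_mul]
    have h1 := hns (WithLp.toLp 2 y)
    have h2 := hlb (WithLp.toLp 2 y)
    simp only [WithLp.ofLp_toLp] at h1 h2
    rw [← h1]
    linarith [h2]
  set d : EuclideanSpace ℝ (Fin n) := ystar - yeta with hd
  set L : ℝ := 2 * (yeta ⬝ᵥ A.mulVec d) + 2 * (g ⬝ᵥ d) + 2 * η * (yeta ⬝ᵥ d) with hL
  set C : ℝ := d ⬝ᵥ A.mulVec d + η * (d ⬝ᵥ d) with hC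
  have key : ∀ t : ℝ, fη (yeta + t • d) = fη yeta + t * L + t ^ 2 * C := by
    intro t
    rw [hfη, hf, hns, hfη yeta, hf yeta, hns yeta, hL, hC]
    exact expand_quad A hbil g yeta d η t lamQ
  have hmem : ∀ t : ℝ, 0 ≤ t → t ≤ 1 →
      yeta + t • d ∈ Metric.closedBall (0 : EuclideanSpace ℝ (Fin n)) 1 := by
    intro t ht0 ht1
    have heq : yeta + t • d = (1 - t) • yeta + t • ystar := by
      rw [hd]; module
    rw [heq]
    exact convex_closedBall (0 : EuclideanSpace ℝ (Fin n)) 1 hyeta hystar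
      (by linarith) ht0 (by ring)
  have hopt : ∀ t : ℝ, 0 < t → t ≤ 1 → 0 ≤ L + t * C := by
    intro t ht0 ht1
    have h1 := hyetamin _ (hmem t (le_of_lt ht0) ht1)
    rw [key t] at h1
    nlinarith
  have hdd : 0 ≤ d ⬝ᵥ d := by rw [← hns]; positivity
  have hC0 : 0 ≤ C := add_nonneg (hApsd d) (by positivity)
  have hCd : η * ‖d‖ ^ 2 ≤ C := by
    rw [hC, hns]
    linarith [hApsd d]
  have hL0 : 0 ≤ L := by
    by_contra h
    push_neg at h
    set t : ℝ := min 1 ((-L) / (2 * (C + 1))) with htdef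
    have htpos : 0 < t := lt_min one_pos (div_pos (by linarith) (by linarith))
    have ht1 : t ≤ 1 := min_le_left _ _
    have ht2 : t * (2 * (C + 1)) ≤ -L := by
      have := min_le_right 1 ((-L) / (2 * (C + 1)))
      calc t * (2 * (C + 1)) ≤ (-L) / (2 * (C + 1)) * (2 * (C + 1)) := by nlinarith
        _ = -L := by field_simp
    have := hopt t htpos ht1
    nlinarith
  have hmain : L + C ≤ η * (‖ystar‖ ^ 2 - ‖yeta‖ ^ 2) := by
    have h1 := key 1
    have heq1 : yeta + (1 : ℝ) • d = ystar := by rw [hd]; module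
    rw [heq1, one_pow, one_mul, one_mul] at h1
    have h2 := hystarmin yeta hyeta
    rw [hfη ystar, hfη yeta] at h1
    linarith
  have hkey : ‖ystar - yeta‖ ^ 2 ≤ ‖ystar‖ ^ 2 - ‖yeta‖ ^ 2 := by
    have : η * ‖d‖ ^ 2 ≤ η * (‖ystar‖ ^ 2 - ‖yeta‖ ^ 2) := by linarith
    have := (mul_le_mul_iff_right₀ hη).mp this
    rwa [hd] at this
  have hnorm : ‖yeta‖ ≤ ‖ystar‖ := by
    have h1 : ‖yeta‖ ^ 2 ≤ ‖ystar‖ ^ 2 := by nlinarith [sq_nonneg ‖ystar - yeta‖]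
    exact (pow_le_pow_iff_left₀ (norm_nonneg _) (norm_nonneg _) two_ne_zero).mp h1
  refine ⟨hkey, hnorm, fun hone => ?_⟩
  have hst : ‖ystar‖ ≤ 1 := by
    simpa [Metric.mem_closedBall, dist_zero_right] using hystar
  have h0 : ‖ystar - yeta‖ ^ 2 ≤ 0 := by
    rw [hone] at hnorm
    nlinarith
  have : ystar - yeta = 0 := by
    have := norm_nonneg (ystar - yeta)
    have : ‖ystar - yeta‖ = 0 := by nlinarith
    exact norm_eq_zero.mp this
  have := sub_eq_zero.mp this
  exact this.symm
end
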